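/- Let L be a Z_p-Lie algebra acting on M via ψ with action length d < p, and G = exp(L) the corresponding group via the truncated BCH multiplication, acting via exp(ψ). Then the coinvariants agree: M/[M,L] = M/[M,G], i.e. the submodules [M,L] = Span{ψ(a)m} and [M,G] = Span{m - exp(ψ)(a)m} of M are equal. Hence H_0 of the Lie action and H_0 of the group action coincide. -/

import Mathlib

attribute [local instance 100] LieRing.ofAssociativeRing

/-- Truncated exponential `∑_{k<p} f^k/k!` of an endomorphism of a `ℤ_[p]`-module. -/
noncomputable def texp (p : ℕ) [Fact p.Prime] {M : Type*} [AddCommGroup M] [Module ℤ_[p] M]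
    (f : Module.End ℤ_[p] M) : Module.End ℤ_[p] M :=
  ∑ k ∈ Finset.range p, Ring.inverse ((k.factorial : ℤ_[p])) • f ^ k

/-- Truncated logarithm `∑_{1≤k≤p-1} (-1)^{k+1}(g-1)^k/k`. -/
noncomputable def tlog (p : ℕ) [Fact p.Prime] {M : Type*} [AddCommGroup M] [Module ℤ_[p] M]
    (g : Module.End ℤ_[p] M) : Module.End ℤ_[p] M :=
  ∑ k ∈ Finset.Icc 1 (p - 1), ((-1 : ℤ_[p]) ^ (k + 1) * Ring.inverse ((k : ℤ_[p]))) • (g - 1) ^ k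


/-- `[U, L] = Span{a·m : m ∈ U, a ∈ L}`. -/
noncomputable def lieBr (p : ℕ) [Fact p.Prime] {M L : Type*} [AddCommGroup M] [Module ℤ_[p] M]
    [LieRing L] [LieAlgebra ℤ_[p] L]
    (ψ : L →ₗ⁅ℤ_[p]⁆ Module.End ℤ_[p] M) (U : Submodule ℤ_[p] M) : Submodule ℤ_[p] M :=
  Submodule.span ℤ_[p] {x | ∃ a : L, ∃ m ∈ U, x = ψ a m}

/-- Iterated `[M, _i L]`, with `[M, _0 L] = M`. -/
noncomputable def lieIter (p : ℕ) [Fact p.Prime] {M L : Type*} [AddCommGroup M] [Module ℤ_[p] M]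
    [LieRing L] [LieAlgebra ℤ_[p] L]
    (ψ : L →ₗ⁅ℤ_[p]⁆ Module.End ℤ_[p] M) : ℕ → Submodule ℤ_[p] M
  | 0 => ⊤
  | (i+1) => lieBr p ψ (lieIter p ψ i)


/-- `[U, exp(L)] = Span{m - exp(ψ(a))·m : m ∈ U, a ∈ L}`. -/
noncomputable def expBr (p : ℕ) [Fact p.Prime] {M L : Type*} [AddCommGroup M] [Module ℤ_[p] M]
    [LieRing L] [LieAlgebra ℤ_[p] L]
    (ψ : L →ₗ⁅ℤ_[p]⁆ Module.End ℤ_[p] M) (U : Submodule ℤ_[p] M) : Submodule ℤ_[p] M :=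
  Submodule.span ℤ_[p] {x | ∃ a : L, ∃ m ∈ U, x = m - texp p (ψ a) m}

/-- Iterated `[M, _i exp(L)]`. -/
noncomputable def expIter (p : ℕ) [Fact p.Prime] {M L : Type*} [AddCommGroup M] [Module ℤ_[p] M]
    [LieRing L] [LieAlgebra ℤ_[p] L]
    (ψ : L →ₗ⁅ℤ_[p]⁆ Module.End ℤ_[p] M) : ℕ → Submodule ℤ_[p] M
  | 0 => ⊤
  | (i+1) => expBr p ψ (expIter p ψ i)

section
variable {p : ℕ} [Fact p.Prime] {M L : Type*} [AddCommGroup M] [Module ℤ_[p] M]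
    [LieRing L] [LieAlgebra ℤ_[p] L] (ψ : L →ₗ⁅ℤ_[p]⁆ Module.End ℤ_[p] M)

lemma lieBr_mono {U V : Submodule ℤ_[p] M} (h : U ≤ V) : lieBr p ψ U ≤ lieBr p ψ V :=
  Submodule.span_mono (by rintro x ⟨a, m, hm, rfl⟩; exact ⟨a, m, h hm, rfl⟩)

lemma lieIter_succ_le (i : ℕ) : lieIter p ψ (i + 1) ≤ lieIter p ψ i := by
  induction i with
  | zero => exact le_top
  | succ n ih => exact lieBr_mono ψ ih

lemma lieIter_antitone {i j : ℕ} (h : i ≤ j) : lieIter p ψ j ≤ lieIter p ψ i := by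
  induction j with
  | zero => simp_all
  | succ n ih =>
    rcases Nat.lt_or_ge i (n + 1) with h' | h'
    · exact (lieIter_succ_le ψ n).trans (ih (Nat.lt_succ_iff.mp h'))
    · have : i = n + 1 := le_antisymm h h'
      subst this; exact le_rfl

lemma apply_mem_lieBr {U : Submodule ℤ_[p] M} (a : L) {m : M} (hm : m ∈ U) :
    ψ a m ∈ lieBr p ψ U := Submodule.subset_span ⟨a, m, hm, rfl⟩

lemma pow_mem_lieIter (a : L) (k : ℕ) {i : ℕ} {m : M} (hm : m ∈ lieIter p ψ i) :
    ((ψ a) ^ k) m ∈ lieIter p ψ (i + k) := by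
  induction k with
  | zero => simpa using hm
  | succ n ih =>
    rw [pow_succ', Module.End.mul_apply]
    exact apply_mem_lieBr ψ a ih

lemma texp_apply (f : Module.End ℤ_[p] M) (m : M) :
    texp p f m = ∑ k ∈ Finset.range p, Ring.inverse ((k.factorial : ℤ_[p])) • (f ^ k) m := by
  simp [texp, LinearMap.sum_apply, LinearMap.smul_apply]

end
/-- For a Lie action of length `d < p`, the coinvariant submodules agree:
`[M, L] = Span{ψ(a)m}` equals `[M, exp(L)] = Span{m - exp(ψ(a))m}`, hence
`H₀(L, M) = M/[M,L] = M/[M, exp(L)] = H₀(exp(L), M)`. -/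
theorem stmt11 {p : ℕ} [Fact p.Prime] {M L : Type*} [AddCommGroup M] [Module ℤ_[p] M]
    [LieRing L] [LieAlgebra ℤ_[p] L] (ψ : L →ₗ⁅ℤ_[p]⁆ Module.End ℤ_[p] M)
    (d : ℕ) (hd : d < p) (h : lieIter p ψ d = ⊥) :
    lieBr p ψ ⊤ = expBr p ψ ⊤ := by
  have hp2 : 2 ≤ p := (Fact.out (p := p.Prime)).two_le
  apply le_antisymm
  · have key : ∀ j : ℕ, ∀ a : L, ∀ m : M, m ∈ lieIter p ψ (d - j) → ψ a m ∈ expBr p ψ ⊤ := by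
      intro j
      induction j with
      | zero =>
        intro a m hm
        rw [Nat.sub_zero, h, Submodule.mem_bot] at hm
        simp [hm]
      | succ n ih =>
        intro a m hm
        have hsplit : texp p (ψ a) m = m + ψ a m +
            ∑ k ∈ Finset.Ico 2 p, Ring.inverse ((k.factorial : ℤ_[p])) • ((ψ a) ^ k) m := by
          rw [texp_apply, Finset.range_eq_Ico,
            Finset.sum_eq_sum_Ico_succ_bot (by omega : 0 < p),
            Finset.sum_eq_sum_Ico_succ_bot (by omega : 1 < p)]
          simp [Nat.factorial]
          abel
        have heq : ψ a m = -(m - texp p (ψ a) m) -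
            ∑ k ∈ Finset.Ico 2 p, Ring.inverse ((k.factorial : ℤ_[p])) • ((ψ a) ^ k) m := by
          rw [hsplit]; abel
        rw [heq]
        apply Submodule.sub_mem
        · exact Submodule.neg_mem _ (Submodule.subset_span ⟨a, m, trivial, rfl⟩)
        · apply Submodule.sum_mem
          intro k hk
          rw [Finset.mem_Ico] at hk
          apply Submodule.smul_mem
          obtain ⟨k', rfl⟩ : ∃ k', k = k' + 1 := ⟨k - 1, by omega⟩
          rw [pow_succ', Module.End.mul_apply]
          apply ih a
          have hmem := pow_mem_lieIter ψ a k' hm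
          exact lieIter_antitone ψ (by omega) hmem
    apply Submodule.span_le.mpr
    rintro x ⟨a, m, -, rfl⟩
    exact key d a m (by rw [Nat.sub_self]; trivial)
  · apply Submodule.span_le.mpr
    rintro x ⟨a, m, -, rfl⟩
    have heq : m - texp p (ψ a) m =
        -∑ k ∈ Finset.Ico 1 p, Ring.inverse ((k.factorial : ℤ_[p])) • ((ψ a) ^ k) m := by
      rw [texp_apply, Finset.range_eq_Ico,
        Finset.sum_eq_sum_Ico_succ_bot (by omega : 0 < p)]
      simp
    rw [heq]
    apply Submodule.neg_mem
    apply Submodule.sum_mem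
    intro k hk
    rw [Finset.mem_Ico] at hk
    apply Submodule.smul_mem
    obtain ⟨k', rfl⟩ : ∃ k', k = k' + 1 := ⟨k - 1, by omega⟩
    rw [pow_succ', Module.End.mul_apply]
    exact Submodule.subset_span ⟨a, _, trivial, rfl⟩
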